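/- arXiv:2605.21978 — 3 statements merged into one kernel-verified Lean document; each statement's English description precedes it below -/
import Mathlib

section
/- Let λ, θ, γ be real with λ ≠ 1, and let Λ = cos θ · (1 + γ(1 − 2λ)). Let (φₙ) be a sequence of positive reals and define a sequence (Aₙ) by A₁ = (1 − 2λ)Λ / ((1 − λ)φ₁) and A_{n+1} = (2Λ / ((n+2)(1 − λ)φ_{n+1})) · (1 − 2λ + Σ_{k=1}^{n} φₖ(1 − λ + kλ)Aₖ). Then for all n ≥ 2, Aₙ = ((1 − 2λ)Λ / ((1 − λ)ⁿ φₙ)) · ∏_{k=1}^{n−1} ((k+1)(1 − λ) + 2(1 − λ + kλ)Λ)/(k+2). -/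
open Finset Real

theorem stmt_0 (lam theta gam Lam : ℝ) (hlam : lam ≠ 1)
    (hLam : Lam = Real.cos theta * (1 + gam * (1 - 2 * lam)))
    (phi : ℕ → ℝ) (hphi : ∀ n, 0 < phi n)
    (A : ℕ → ℝ)
    (hA1 : A 1 = (1 - 2 * lam) * Lam / ((1 - lam) * phi 1))
    (hrec : ∀ n : ℕ, 1 ≤ n →
      A (n + 1) = (2 * Lam / (((n : ℝ) + 2) * (1 - lam) * phi (n + 1))) *
        ((1 - 2 * lam) + ∑ k ∈ Finset.Icc 1 n, phi k * (1 - lam + (k : ℝ) * lam) * A k)) :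
    ∀ n : ℕ, 2 ≤ n →
      A n = ((1 - 2 * lam) * Lam / ((1 - lam) ^ n * phi n)) *
        ∏ k ∈ Finset.Icc 1 (n - 1),
          (((k : ℝ) + 1) * (1 - lam) + 2 * (1 - lam + (k : ℝ) * lam) * Lam) / ((k : ℝ) + 2) := by
  have h1 : (1 : ℝ) - lam ≠ 0 := sub_ne_zero.mpr (Ne.symm hlam)
  have key : ∀ n : ℕ, 1 ≤ n →
      ((1 - 2 * lam) + ∑ k ∈ Finset.Icc 1 n, phi k * (1 - lam + (k : ℝ) * lam) * A k)
        = (1 - 2 * lam) * ((n : ℝ) + 2) / 2 *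
          (∏ k ∈ Finset.Icc 1 n,
            (((k : ℝ) + 1) * (1 - lam) + 2 * (1 - lam + (k : ℝ) * lam) * Lam) / ((k : ℝ) + 2))
          / (1 - lam) ^ n := by
    intro n hn
    induction n with
    | zero => omega
    | succ m ih =>
      rcases Nat.lt_or_ge m 1 with h | hm
      · interval_cases m
        have hphi1 : phi 1 ≠ 0 := (hphi 1).ne'
        simp only [Finset.Icc_self, Finset.sum_singleton, Finset.prod_singleton, hA1]
        push_cast
        field_simp
        ring
      · have ihm := ih hm
        have hphim : phi (m + 1) ≠ 0 := (hphi _).ne'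
        have hm2 : ((m : ℝ) + 2) ≠ 0 := by positivity
        rw [Finset.sum_Icc_succ_top (by omega : 1 ≤ m + 1),
          Finset.prod_Icc_succ_top (by omega : 1 ≤ m + 1), hrec m hm]
        set s := ∑ k ∈ Finset.Icc 1 m, phi k * (1 - lam + (k : ℝ) * lam) * A k with hs
        have hsv : s = (1 - 2 * lam) * ((m : ℝ) + 2) / 2 *
            (∏ k ∈ Finset.Icc 1 m,
              (((k : ℝ) + 1) * (1 - lam) + 2 * (1 - lam + (k : ℝ) * lam) * Lam) / ((k : ℝ) + 2))
            / (1 - lam) ^ m - (1 - 2 * lam) := by linarith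
        rw [hsv]
        generalize (∏ k ∈ Finset.Icc 1 m,
          (((k : ℝ) + 1) * (1 - lam) + 2 * (1 - lam + (k : ℝ) * lam) * Lam) / ((k : ℝ) + 2)) = P
        push_cast
        field_simp
        ring
  intro n hn
  obtain ⟨m, rfl⟩ : ∃ m, n = m + 1 := ⟨n - 1, by omega⟩
  have hm : 1 ≤ m := by omega
  have hphim : phi (m + 1) ≠ 0 := (hphi _).ne'
  have hm2 : ((m : ℝ) + 2) ≠ 0 := by positivity
  rw [hrec m hm, key m hm]
  simp only [Nat.add_sub_cancel]
  push_cast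
  field_simp
  ring
end

section
/- Let H(z) = 1/z + Σ_{n≥1} cₙ zⁿ be analytic on the punctured unit disk with Σ_{n≥1} |cₙ| r^{n+1} < 1 for some 0 < r < 1, and let 0 ≤ ρ < 1. If Σ_{n≥1} (n+2−ρ)|cₙ| r^{n+1} ≤ 1 − ρ, then for all z with 0 < |z| < r, |z H'(z)/H(z) + 1| ≤ 1 − ρ. -/
open Complex

private lemma stmt7_pow_aux {r s : ℝ} (hs0 : 0 ≤ s) (hsr : s ≤ r) (hr1 : r ≤ 1)
    {n k : ℕ} (hk : n ≤ k) : s ^ k ≤ r ^ n :=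
  le_trans (pow_le_pow_left₀ hs0 hsr k)
    (pow_le_pow_of_le_one (le_trans hs0 hsr) hr1 hk)

theorem stmt_7 (c : ℕ → ℂ) (r ρ : ℝ) (hr0 : 0 < r) (hr1 : r < 1)
    (hρ0 : 0 ≤ ρ) (hρ1 : ρ < 1)
    (hsum : Summable (fun n : ℕ => ((n : ℝ) + 2) * ‖c (n + 1)‖ * r ^ (n + 2)))
    (hS : ∑' n : ℕ, ‖c (n + 1)‖ * r ^ (n + 2) < 1)
    (H : ℂ → ℂ)
    (hH : ∀ z : ℂ, 0 < ‖z‖ → ‖z‖ < 1 →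
      H z = 1 / z + ∑' n : ℕ, c (n + 1) * z ^ (n + 1))
    (hcoef : ∑' n : ℕ, ((n : ℝ) + 3 - ρ) * ‖c (n + 1)‖ * r ^ (n + 2) ≤ 1 - ρ) :
    ∀ z : ℂ, 0 < ‖z‖ → ‖z‖ < r →
      ‖z * deriv H z / H z + 1‖ ≤ 1 - ρ := by
  intro z hz0 hzr
  have hznz : z ≠ 0 := by
    intro h; simp [h] at hz0
  set a : ℕ → ℝ := fun n => ‖c (n + 1)‖ with ha
  have ha0 : ∀ n, 0 ≤ a n := fun n => norm_nonneg _
  set s : ℝ := ‖z‖ with hsdef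
  have hs0 : 0 < s := hz0
  have hsr : s < r := hzr
  have hs1 : s < 1 := hsr.trans hr1
  -- master summable function
  have hM : Summable (fun n : ℕ => (((n : ℝ) + 3) * a n) * r ^ n) := by
    apply Summable.of_nonneg_of_le (fun n => by positivity)
      (fun n => ?_) (hsum.mul_left (2 * r⁻¹ * r⁻¹))
    have he : 2 * r⁻¹ * r⁻¹ * (((n : ℝ) + 2) * a n * r ^ (n + 2))
        = (2 * ((n : ℝ) + 2) * a n) * r ^ n := by
      field_simp
      ring
    rw [he]
    have h1 := ha0 n
    have h2 : (0:ℝ) ≤ r ^ n := pow_nonneg hr0.le n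
    have h3 : (0:ℝ) ≤ (n : ℝ) := Nat.cast_nonneg n
    nlinarith [mul_nonneg h1 h2]
  -- generic bound tool
  have mk : ∀ (f : ℕ → ℝ), (∀ n, 0 ≤ f n) →
      (∀ n, f n ≤ (((n : ℝ) + 3) * a n) * r ^ n) → Summable f :=
    fun f h1 h2 => Summable.of_nonneg_of_le h1 h2 hM
  have hbound : ∀ (n k : ℕ) (t : ℝ), n ≤ k → 0 ≤ t → t ≤ r → ∀ b : ℝ, 0 ≤ b → b ≤ (n : ℝ) + 3 →
      b * a n * t ^ k ≤ (((n : ℝ) + 3) * a n) * r ^ n := by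
    intro n k t hk ht0 htr b hb0 hb
    have h1 : t ^ k ≤ r ^ n := stmt7_pow_aux ht0 htr hr1.le hk
    have h2 : b * a n ≤ ((n : ℝ) + 3) * a n :=
      mul_le_mul_of_nonneg_right hb (ha0 n)
    calc b * a n * t ^ k ≤ b * a n * r ^ n :=
          mul_le_mul_of_nonneg_left h1 (mul_nonneg hb0 (ha0 n))
      _ ≤ ((n : ℝ) + 3) * a n * r ^ n :=
          mul_le_mul_of_nonneg_right h2 (pow_nonneg hr0.le n)
  have hn3 : ∀ n : ℕ, (0:ℝ) ≤ (n : ℝ) + 3 - ρ := by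
    intro n; have : (0:ℝ) ≤ (n:ℝ) := Nat.cast_nonneg n; linarith
  -- summability statements
  have S_s1 : Summable (fun n : ℕ => a n * s ^ (n + 1)) := by
    apply mk _ (fun n => by positivity)
    intro n
    have := hbound n (n + 1) s (Nat.le_succ n) hs0.le hsr.le 1 zero_le_one
      (by have : (0:ℝ) ≤ (n:ℝ) := Nat.cast_nonneg n; linarith)
    simpa using this
  have S_s2 : Summable (fun n : ℕ => a n * s ^ (n + 2)) := by
    apply mk _ (fun n => by positivity)
    intro n
    have := hbound n (n + 2) s (by omega) hs0.le hsr.le 1 zero_le_one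
      (by have : (0:ℝ) ≤ (n:ℝ) := Nat.cast_nonneg n; linarith)
    simpa using this
  have S_r2 : Summable (fun n : ℕ => a n * r ^ (n + 2)) := by
    apply mk _ (fun n => by positivity)
    intro n
    have := hbound n (n + 2) r (by omega) hr0.le le_rfl 1 zero_le_one
      (by have : (0:ℝ) ≤ (n:ℝ) := Nat.cast_nonneg n; linarith)
    simpa using this
  have S2_s1 : Summable (fun n : ℕ => ((n : ℝ) + 2) * a n * s ^ (n + 1)) := by
    apply mk _ (fun n => by positivity)
    intro n
    exact hbound n (n + 1) s (Nat.le_succ n) hs0.le hsr.le ((n : ℝ) + 2) (by positivity)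
      (by linarith)
  have S2_s2 : Summable (fun n : ℕ => ((n : ℝ) + 2) * a n * s ^ (n + 2)) := by
    apply mk _ (fun n => by positivity)
    intro n
    exact hbound n (n + 2) s (by omega) hs0.le hsr.le ((n : ℝ) + 2) (by positivity)
      (by linarith)
  have Sρ_s2 : Summable (fun n : ℕ => ((n : ℝ) + 3 - ρ) * a n * s ^ (n + 2)) := by
    apply mk _ (fun n => mul_nonneg (mul_nonneg (hn3 n) (ha0 n)) (by positivity))
    intro n
    exact hbound n (n + 2) s (by omega) hs0.le hsr.le ((n : ℝ) + 3 - ρ) (hn3 n)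
      (by linarith)
  have Sρ_r2 : Summable (fun n : ℕ => ((n : ℝ) + 3 - ρ) * a n * r ^ (n + 2)) := by
    apply mk _ (fun n => mul_nonneg (mul_nonneg (hn3 n) (ha0 n)) (by positivity))
    intro n
    exact hbound n (n + 2) r (by omega) hr0.le le_rfl ((n : ℝ) + 3 - ρ) (hn3 n)
      (by linarith)
  have Su : Summable (fun n : ℕ => ((n : ℝ) + 2) * a n * r ^ n) := by
    apply mk _ (fun n => by positivity)
    intro n
    exact hbound n n r le_rfl hr0.le le_rfl ((n : ℝ) + 2) (by positivity) (by linarith)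
  -- abs of casts
  have habs2 : ∀ n : ℕ, ‖(n : ℂ) + 2‖ = (n : ℝ) + 2 := by
    intro n
    rw [show ((n : ℂ) + 2) = (((n : ℝ) + 2 : ℝ) : ℂ) by push_cast; ring,
      Complex.norm_real, Real.norm_eq_abs]
    exact abs_of_nonneg (by positivity)
  have habs1 : ∀ n : ℕ, ‖(n : ℂ) + 1‖ = (n : ℝ) + 1 := by
    intro n
    rw [show ((n : ℂ) + 1) = (((n : ℝ) + 1 : ℝ) : ℂ) by push_cast; ring,
      Complex.norm_real, Real.norm_eq_abs]
    exact abs_of_nonneg (by positivity)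
  -- complex summability
  have CS1 : Summable (fun n : ℕ => c (n + 1) * z ^ (n + 1)) := by
    apply Summable.of_norm
    apply S_s1.congr
    intro n
    simp [map_mul, map_pow, ha, hsdef]
  have CS2W : Summable (fun n : ℕ => c (n + 1) * (((n : ℂ) + 1) * z ^ n)) := by
    apply Summable.of_norm_bounded Su
    intro n
    have he : ‖c (n + 1) * (((n : ℂ) + 1) * z ^ n)‖ = a n * (((n : ℝ) + 1) * s ^ n) := by
      simp [map_mul, map_pow, habs1 n, ha, hsdef]
    rw [he]
    have h1 : s ^ n ≤ r ^ n := pow_le_pow_left₀ hs0.le hsr.le n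
    have h2 := ha0 n
    have h3 : (0:ℝ) ≤ (n : ℝ) := Nat.cast_nonneg n
    calc a n * (((n : ℝ) + 1) * s ^ n) = ((n : ℝ) + 1) * (a n * s ^ n) := by ring
      _ ≤ ((n : ℝ) + 1) * (a n * r ^ n) :=
          mul_le_mul_of_nonneg_left (mul_le_mul_of_nonneg_left h1 h2) (by positivity)
      _ ≤ ((n : ℝ) + 2) * (a n * r ^ n) :=
          mul_le_mul_of_nonneg_right (by linarith) (mul_nonneg h2 (pow_nonneg hr0.le n))
      _ = ((n : ℝ) + 2) * a n * r ^ n := by ring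
  -- derivative of the tail series on the ball of radius r
  have hT : HasDerivAt (fun x : ℂ => ∑' n : ℕ, c (n + 1) * x ^ (n + 1))
      (∑' n : ℕ, c (n + 1) * (((n : ℂ) + 1) * z ^ n)) z := by
    apply hasDerivAt_tsum_of_isPreconnected Su Metric.isOpen_ball
      (convex_ball (0 : ℂ) r).isPreconnected
      (g := fun n x => c (n + 1) * x ^ (n + 1))
      (g' := fun n y => c (n + 1) * (((n : ℂ) + 1) * y ^ n))
      (y₀ := 0)
    · intro n y _
      have := (hasDerivAt_pow (n + 1) y).const_mul (c (n + 1))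
      simpa using this
    · intro n y hy
      rw [Metric.mem_ball, dist_zero_right] at hy
      have he : ‖c (n + 1) * (((n : ℂ) + 1) * y ^ n)‖
          = a n * (((n : ℝ) + 1) * ‖y‖ ^ n) := by
        simp [map_mul, map_pow, habs1 n, ha]
      rw [he]
      have hy' : ‖y‖ ≤ r := le_of_lt (by simpa using hy)
      have h1 : ‖y‖ ^ n ≤ r ^ n :=
        pow_le_pow_left₀ (norm_nonneg y) hy' n
      have h2 := ha0 n
      have h3 : (0:ℝ) ≤ (n : ℝ) := Nat.cast_nonneg n
      calc a n * (((n : ℝ) + 1) * ‖y‖ ^ n)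
          = ((n : ℝ) + 1) * (a n * ‖y‖ ^ n) := by ring
        _ ≤ ((n : ℝ) + 1) * (a n * r ^ n) :=
            mul_le_mul_of_nonneg_left (mul_le_mul_of_nonneg_left h1 h2) (by positivity)
        _ ≤ ((n : ℝ) + 2) * (a n * r ^ n) :=
            mul_le_mul_of_nonneg_right (by linarith) (mul_nonneg h2 (pow_nonneg hr0.le n))
        _ = ((n : ℝ) + 2) * a n * r ^ n := by ring
    · exact Metric.mem_ball_self hr0
    · apply Summable.congr summable_zero
      intro n
      simp
    · rw [Metric.mem_ball, dist_zero_right]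
      simpa using hsr
  -- H agrees with the explicit formula near z
  have hopen : IsOpen {x : ℂ | x ≠ 0 ∧ ‖x‖ < 1} := by
    apply IsOpen.inter isOpen_ne
    exact isOpen_lt continuous_norm continuous_const
  have hev : H =ᶠ[nhds z] fun x => x⁻¹ + ∑' n : ℕ, c (n + 1) * x ^ (n + 1) := by
    filter_upwards [hopen.mem_nhds ⟨hznz, hs1⟩] with x hx
    rw [hH x (norm_pos_iff.mpr hx.1) hx.2, one_div]
  have hF : HasDerivAt (fun x : ℂ => x⁻¹ + ∑' n : ℕ, c (n + 1) * x ^ (n + 1))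
      (-(z ^ 2)⁻¹ + ∑' n : ℕ, c (n + 1) * (((n : ℂ) + 1) * z ^ n)) z :=
    (hasDerivAt_inv hznz).add hT
  have hderiv : deriv H z
      = -(z ^ 2)⁻¹ + ∑' n : ℕ, c (n + 1) * (((n : ℂ) + 1) * z ^ n) := by
    rw [hev.deriv_eq]
    exact hF.deriv
  have hHz : H z = z⁻¹ + ∑' n : ℕ, c (n + 1) * z ^ (n + 1) := by
    rw [hH z hz0 hs1, one_div]
  -- numerator
  set N : ℂ := ∑' n : ℕ, ((n : ℂ) + 2) * c (n + 1) * z ^ (n + 1) with hN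
  have hnum : z * deriv H z + H z = N := by
    rw [hderiv, hHz]
    have h1 : z * (-(z ^ 2)⁻¹ + ∑' n : ℕ, c (n + 1) * (((n : ℂ) + 1) * z ^ n))
        + (z⁻¹ + ∑' n : ℕ, c (n + 1) * z ^ (n + 1))
        = z * (∑' n : ℕ, c (n + 1) * (((n : ℂ) + 1) * z ^ n))
          + ∑' n : ℕ, c (n + 1) * z ^ (n + 1) := by
      field_simp
      ring
    rw [h1, ← tsum_mul_left, ← Summable.tsum_add (CS2W.mul_left z) CS1]
    apply tsum_congr
    intro n
    ring
  -- real sums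
  set A : ℝ := ∑' n : ℕ, a n * s ^ (n + 1) with hA
  set B : ℝ := ∑' n : ℕ, ((n : ℝ) + 2) * a n * s ^ (n + 1) with hB
  have hA_nonneg : 0 ≤ A := tsum_nonneg (fun n => by positivity)
  have hB_nonneg : 0 ≤ B := tsum_nonneg (fun n => by positivity)
  -- |N| ≤ B
  have hNle : ‖N‖ ≤ B := by
    have hnorm : ∀ n : ℕ, ‖((n : ℂ) + 2) * c (n + 1) * z ^ (n + 1)‖
        = ((n : ℝ) + 2) * a n * s ^ (n + 1) := by
      intro n
      simp [map_mul, map_pow, habs2 n, ha, hsdef]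
    have hsn : Summable (fun n : ℕ => ‖((n : ℂ) + 2) * c (n + 1) * z ^ (n + 1)‖) :=
      S2_s1.congr (fun n => (hnorm n).symm)
    calc ‖N‖ ≤ ∑' n : ℕ, ‖((n : ℂ) + 2) * c (n + 1) * z ^ (n + 1)‖ := by
          simpa using norm_tsum_le_tsum_norm hsn
      _ = B := tsum_congr hnorm
  -- |T| ≤ A
  have hTle : ‖∑' n : ℕ, c (n + 1) * z ^ (n + 1)‖ ≤ A := by
    have hnorm : ∀ n : ℕ, ‖c (n + 1) * z ^ (n + 1)‖ = a n * s ^ (n + 1) := by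
      intro n
      simp [map_mul, map_pow, ha, hsdef]
    have hsn : Summable (fun n : ℕ => ‖c (n + 1) * z ^ (n + 1)‖) :=
      S_s1.congr (fun n => (hnorm n).symm)
    calc ‖∑' n : ℕ, c (n + 1) * z ^ (n + 1)‖
        ≤ ∑' n : ℕ, ‖c (n + 1) * z ^ (n + 1)‖ := by
          simpa using norm_tsum_le_tsum_norm hsn
      _ = A := tsum_congr hnorm
  -- s*A < 1
  have hsA : s * A < 1 := by
    have e2 : s * A = ∑' n : ℕ, a n * s ^ (n + 2) := by
      rw [hA, ← tsum_mul_left]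
      exact tsum_congr fun n => by ring
    rw [e2]
    calc (∑' n : ℕ, a n * s ^ (n + 2)) ≤ ∑' n : ℕ, a n * r ^ (n + 2) := by
          apply Summable.tsum_le_tsum _ S_s2 S_r2
          intro n
          exact mul_le_mul_of_nonneg_left (pow_le_pow_left₀ hs0.le hsr.le _) (ha0 n)
      _ < 1 := hS
  have hpos : 0 < s⁻¹ - A := by
    have hinv : s * s⁻¹ = 1 := mul_inv_cancel₀ hs0.ne'
    nlinarith [hsA, hs0]
  -- lower bound on |H z|
  have hHlow : s⁻¹ - A ≤ ‖H z‖ := by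
    rw [hHz]
    have h1 : ‖z⁻¹‖ = s⁻¹ := by rw [norm_inv]
    have h2 : ‖(z⁻¹ : ℂ)‖ ≤ ‖z⁻¹ + ∑' n : ℕ, c (n + 1) * z ^ (n + 1)‖
        + ‖∑' n : ℕ, c (n + 1) * z ^ (n + 1)‖ := by
      calc ‖(z⁻¹ : ℂ)‖ = ‖(z⁻¹ + ∑' n : ℕ, c (n + 1) * z ^ (n + 1))
            - ∑' n : ℕ, c (n + 1) * z ^ (n + 1)‖ := by congr 1; ring
        _ ≤ _ := norm_sub_le _ _
    rw [h1] at h2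
    linarith
  have hHne : H z ≠ 0 := by
    intro h
    rw [h] at hHlow
    simp at hHlow
    linarith
  -- key coefficient inequality
  have key : s * B + (1 - ρ) * (s * A) ≤ 1 - ρ := by
    have e1 : s * B = ∑' n : ℕ, ((n : ℝ) + 2) * a n * s ^ (n + 2) := by
      rw [hB, ← tsum_mul_left]
      exact tsum_congr fun n => by ring
    have e2 : s * A = ∑' n : ℕ, a n * s ^ (n + 2) := by
      rw [hA, ← tsum_mul_left]
      exact tsum_congr fun n => by ring
    have e3 : (1 - ρ) * (s * A) = ∑' n : ℕ, (1 - ρ) * (a n * s ^ (n + 2)) := by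
      rw [e2, ← tsum_mul_left]
    rw [e1, e3, ← Summable.tsum_add S2_s2 (S_s2.mul_left (1 - ρ))]
    calc (∑' n : ℕ, (((n : ℝ) + 2) * a n * s ^ (n + 2) + (1 - ρ) * (a n * s ^ (n + 2))))
        = ∑' n : ℕ, ((n : ℝ) + 3 - ρ) * a n * s ^ (n + 2) := tsum_congr fun n => by ring
      _ ≤ ∑' n : ℕ, ((n : ℝ) + 3 - ρ) * a n * r ^ (n + 2) := by
          apply Summable.tsum_le_tsum _ Sρ_s2 Sρ_r2
          intro n
          exact mul_le_mul_of_nonneg_left (pow_le_pow_left₀ hs0.le hsr.le _)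
            (mul_nonneg (hn3 n) (ha0 n))
      _ ≤ 1 - ρ := hcoef
  have hBle : B ≤ (1 - ρ) * (s⁻¹ - A) := by
    have h' : (1 - ρ) * (s⁻¹ - A) * s = (1 - ρ) - (1 - ρ) * (s * A) := by
      field_simp
    nlinarith [key, hs0, h']
  -- conclude
  have heq : z * deriv H z / H z + 1 = N / H z := by
    rw [← hnum]
    field_simp
  rw [heq, norm_div]
  calc ‖N‖ / ‖H z‖ ≤ B / (s⁻¹ - A) :=
        div_le_div₀ hB_nonneg hNle hpos hHlow
    _ ≤ 1 - ρ := by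
        rw [div_le_iff₀ hpos]
        calc B ≤ (1 - ρ) * (s⁻¹ - A) := hBle
          _ = (1 - ρ) * (s⁻¹ - A) := rfl
end

section
/- Let H(z) = 1/z + Σ_{n≥1} cₙ zⁿ be analytic on the punctured unit disk with Σ_{n≥1} n|cₙ| r^{n+1} < 1 for some 0 < r < 1, and let 0 ≤ ρ < 1. If Σ_{n≥1} n(n+2−ρ)|cₙ| r^{n+1} ≤ 1 − ρ, then for all z with 0 < |z| < r, |z H''(z)/H'(z) + 2| ≤ 1 − ρ. -/
open Complex

private lemma mid_le8 {x u v A R : ℝ} (hx : 0 ≤ x) (hA : 0 ≤ A) (hR : 0 ≤ R) (hu : u ≤ v) :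
    x * u * A * R ≤ x * v * A * R := by
  have h1 : x * u ≤ x * v := mul_le_mul_of_nonneg_left hu hx
  calc x * u * A * R = (x * u) * (A * R) := by ring
    _ ≤ (x * v) * (A * R) := mul_le_mul_of_nonneg_right h1 (mul_nonneg hA hR)
    _ = x * v * A * R := by ring

theorem stmt_8 (c : ℕ → ℂ) (r ρ : ℝ) (hr0 : 0 < r) (hr1 : r < 1)
    (hρ0 : 0 ≤ ρ) (hρ1 : ρ < 1)
    (hsum : Summable (fun n : ℕ => ((n : ℝ) + 1) * ((n : ℝ) + 3) * ‖c (n + 1)‖ * r ^ (n + 2)))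
    (hS : ∑' n : ℕ, ((n : ℝ) + 1) * ‖c (n + 1)‖ * r ^ (n + 2) < 1)
    (H : ℂ → ℂ)
    (hH : ∀ z : ℂ, 0 < ‖z‖ → ‖z‖ < 1 →
      H z = 1 / z + ∑' n : ℕ, c (n + 1) * z ^ (n + 1))
    (hcoef : ∑' n : ℕ, ((n : ℝ) + 1) * ((n : ℝ) + 3 - ρ) * ‖c (n + 1)‖ * r ^ (n + 2) ≤ 1 - ρ) :
    ∀ z : ℂ, 0 < ‖z‖ → ‖z‖ < r →
      ‖z * deriv (deriv H) z / deriv H z + 2‖ ≤ 1 - ρ := by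
  have ha0 : ∀ n : ℕ, 0 ≤ ‖c (n + 1)‖ := fun n => norm_nonneg _
  have hsum1 : Summable (fun n : ℕ => ((n : ℝ) + 1) * ‖c (n + 1)‖ * r ^ (n + 2)) := by
    refine Summable.of_nonneg_of_le (fun n => by positivity) (fun n => ?_) hsum
    calc ((n : ℝ) + 1) * ‖c (n + 1)‖ * r ^ (n + 2)
        = ((n : ℝ) + 1) * 1 * ‖c (n + 1)‖ * r ^ (n + 2) := by ring
      _ ≤ ((n : ℝ) + 1) * ((n : ℝ) + 3) * ‖c (n + 1)‖ * r ^ (n + 2) :=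
          mid_le8 (by positivity) (ha0 n) (by positivity) (by linarith [Nat.cast_nonneg (α := ℝ) n])
  have hsumT : Summable (fun n : ℕ => ((n : ℝ) + 1) * ((n : ℝ) + 2) * ‖c (n + 1)‖ * r ^ (n + 2)) := by
    refine Summable.of_nonneg_of_le (fun n => by positivity) (fun n => ?_) hsum
    exact mid_le8 (by positivity) (ha0 n) (by positivity) (by linarith)
  set S : ℝ := ∑' n : ℕ, ((n : ℝ) + 1) * ‖c (n + 1)‖ * r ^ (n + 2) with hSdef
  set T : ℝ := ∑' n : ℕ, ((n : ℝ) + 1) * ((n : ℝ) + 2) * ‖c (n + 1)‖ * r ^ (n + 2) with hTdef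
  have hS0 : 0 ≤ S := tsum_nonneg (fun n => by positivity)
  have hT0 : 0 ≤ T := tsum_nonneg (fun n => by positivity)
  have hTS : T + (1 - ρ) * S ≤ 1 - ρ := by
    have hfun : (fun n : ℕ => ((n : ℝ) + 1) * ((n : ℝ) + 3 - ρ) * ‖c (n + 1)‖ * r ^ (n + 2))
        = (fun n : ℕ => ((n : ℝ) + 1) * ((n : ℝ) + 2) * ‖c (n + 1)‖ * r ^ (n + 2)
            + (1 - ρ) * (((n : ℝ) + 1) * ‖c (n + 1)‖ * r ^ (n + 2))) := by
      funext n; ring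
    have h1 : ∑' n : ℕ, (((n : ℝ) + 1) * ((n : ℝ) + 2) * ‖c (n + 1)‖ * r ^ (n + 2)
            + (1 - ρ) * (((n : ℝ) + 1) * ‖c (n + 1)‖ * r ^ (n + 2)))
        = T + (1 - ρ) * S := by
      rw [Summable.tsum_add hsumT (hsum1.mul_left (1 - ρ)), tsum_mul_left]
    rw [hfun, h1] at hcoef
    exact hcoef
  have hT : T ≤ (1 - ρ) * (1 - S) := by nlinarith
  set U : Set ℂ := Metric.ball (0 : ℂ) r with hUdef
  have hUo : IsOpen U := Metric.isOpen_ball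
  have hUc : IsPreconnected U := (convex_ball (0 : ℂ) r).isPreconnected
  have h0U : (0 : ℂ) ∈ U := Metric.mem_ball_self hr0
  have hmemU : ∀ y : ℂ, y ∈ U → ‖y‖ < r := by
    intro y hy
    rw [hUdef, mem_ball_zero_iff] at hy
    exact hy
  have hu1 : Summable (fun n : ℕ => ((n : ℝ) + 1) * ‖c (n + 1)‖ * r ^ n) := by
    refine (hsum1.mul_right ((r ^ 2)⁻¹)).congr (fun n => ?_)
    rw [pow_add]
    field_simp
  have hu2 : Summable (fun n : ℕ => ((n : ℝ) + 1) * ((n : ℝ) + 3) * ‖c (n + 1)‖ * r ^ (n + 2) * (r ^ 3)⁻¹) :=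
    hsum.mul_right _
  have huT : Summable (fun n : ℕ => ((n : ℝ) + 1) * ((n : ℝ) + 2) * ‖c (n + 1)‖ * r ^ n) := by
    refine (hsumT.mul_right ((r ^ 2)⁻¹)).congr (fun n => ?_)
    rw [pow_add]
    field_simp
  have hb1 : ∀ (n : ℕ) (y : ℂ), y ∈ U →
      ‖(c (n + 1) * ((n : ℂ) + 1)) * y ^ n‖ ≤ ((n : ℝ) + 1) * ‖c (n + 1)‖ * r ^ n := by
    intro n y hy
    have hyr : ‖y‖ ≤ r := (hmemU y hy).le
    have h1 : ‖(c (n + 1) * ((n : ℂ) + 1)) * y ^ n‖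
        = ((n : ℝ) + 1) * ‖c (n + 1)‖ * (‖y‖) ^ n := by
      simp only [norm_mul, norm_pow]
      have : ‖(n : ℂ) + 1‖ = (n : ℝ) + 1 := by
        rw [show ((n : ℂ) + 1) = ((n + 1 : ℕ) : ℂ) by push_cast; ring, Complex.norm_natCast]
        push_cast; ring
      rw [this]; ring
    rw [h1]
    gcongr
  have hgd : ∀ y ∈ U, HasDerivAt (fun w : ℂ => ∑' n : ℕ, c (n + 1) * w ^ (n + 1))
      (∑' n : ℕ, (c (n + 1) * ((n : ℂ) + 1)) * y ^ n) y := by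
    intro y hy
    refine hasDerivAt_tsum_of_isPreconnected hu1 hUo hUc
      (g := fun n w => c (n + 1) * w ^ (n + 1))
      (g' := fun n w => (c (n + 1) * ((n : ℂ) + 1)) * w ^ n)
      (fun n w _ => ?_) hb1 h0U ?_ hy
    · have h := (hasDerivAt_pow (n + 1) w).const_mul (c (n + 1))
      refine h.congr_deriv ?_
      push_cast
      ring
    · have : (fun n : ℕ => c (n + 1) * (0 : ℂ) ^ (n + 1)) = fun _ => (0 : ℂ) := by
        funext n; simp
      rw [this]; exact summable_zero
  have hb2 : ∀ (n : ℕ) (y : ℂ), y ∈ U →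
      ‖(c (n + 1) * ((n : ℂ) + 1)) * ((n : ℂ) * y ^ (n - 1))‖
        ≤ ((n : ℝ) + 1) * ((n : ℝ) + 3) * ‖c (n + 1)‖ * r ^ (n + 2) * (r ^ 3)⁻¹ := by
    intro n y hy
    have hyr : ‖y‖ ≤ r := (hmemU y hy).le
    cases n with
    | zero =>
      simp only [Nat.cast_zero, zero_mul, mul_zero, norm_zero]
      positivity
    | succ m =>
      have h1 : ‖(c (m + 1 + 1) * ((((m : ℕ) + 1 : ℕ) : ℂ) + 1)) * ((((m : ℕ) + 1 : ℕ) : ℂ) * y ^ (m + 1 - 1))‖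
          = (((m : ℝ) + 2) * ((m : ℝ) + 1)) * ‖c (m + 2)‖ * (‖y‖) ^ m := by
        simp only [norm_mul, norm_pow, Nat.add_sub_cancel]
        rw [show ((((m : ℕ) + 1 : ℕ) : ℂ) + 1) = ((m + 2 : ℕ) : ℂ) by push_cast; ring,
          Complex.norm_natCast, Complex.norm_natCast]
        push_cast; ring
      rw [h1]
      have h2 : (((m : ℝ) + 2) * ((m : ℝ) + 1)) * ‖c (m + 2)‖ * (‖y‖) ^ m
          ≤ (((m : ℝ) + 2) * ((m : ℝ) + 4)) * ‖c (m + 2)‖ * r ^ m := by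
        gcongr
        linarith
      refine h2.trans (le_of_eq ?_)
      push_cast
      rw [show (m + 1) + 2 = m + 3 by ring, pow_add]
      field_simp
      ring
  have hg1d : ∀ y ∈ U, HasDerivAt (fun w : ℂ => ∑' n : ℕ, (c (n + 1) * ((n : ℂ) + 1)) * w ^ n)
      (∑' n : ℕ, (c (n + 1) * ((n : ℂ) + 1)) * ((n : ℂ) * y ^ (n - 1))) y := by
    intro y hy
    refine hasDerivAt_tsum_of_isPreconnected hu2 hUo hUc
      (g := fun n w => (c (n + 1) * ((n : ℂ) + 1)) * w ^ n)
      (g' := fun n w => (c (n + 1) * ((n : ℂ) + 1)) * ((n : ℂ) * w ^ (n - 1)))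
      (fun n w _ => ?_) hb2 h0U ?_ hy
    · exact (hasDerivAt_pow n w).const_mul (c (n + 1) * ((n : ℂ) + 1))
    · refine summable_of_ne_finset_zero (s := {0}) (fun n hn => ?_)
      simp only [Finset.mem_singleton] at hn
      simp [zero_pow hn]
  -- now fix z
  intro z hz0 hzr
  have hz : z ≠ 0 := by
    intro h; rw [h] at hz0; simp at hz0
  have hzU : z ∈ U := by
    rw [hUdef, mem_ball_zero_iff]; exact hzr
  set t : ℝ := ‖z‖ with htdef
  have ht0 : 0 < t := hz0
  have htr : t < r := hzr
  set V : Set ℂ := U ∩ {w : ℂ | w ≠ 0} with hVdef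
  have hVo : IsOpen V := hUo.inter isOpen_ne
  have hzV : z ∈ V := ⟨hzU, hz⟩
  have hHeq : Set.EqOn H (fun w => 1 / w + ∑' n : ℕ, c (n + 1) * w ^ (n + 1)) V := by
    intro y hy
    exact hH y (norm_pos_iff.mpr hy.2) ((hmemU y hy.1).trans hr1)
  have hfd : ∀ y ∈ V, HasDerivAt (fun w => 1 / w + ∑' n : ℕ, c (n + 1) * w ^ (n + 1))
      (-(y ^ 2)⁻¹ + ∑' n : ℕ, (c (n + 1) * ((n : ℂ) + 1)) * y ^ n) y := by
    intro y hy
    have h1 := (hasDerivAt_inv hy.2).add (hgd y hy.1)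
    simpa only [one_div, Pi.add_def] using h1
  have hderivH : ∀ y ∈ V, deriv H y = -(y ^ 2)⁻¹ + ∑' n : ℕ, (c (n + 1) * ((n : ℂ) + 1)) * y ^ n := by
    intro y hy
    have hev : H =ᶠ[nhds y] (fun w => 1 / w + ∑' n : ℕ, c (n + 1) * w ^ (n + 1)) :=
      Filter.eventuallyEq_of_mem (hVo.mem_nhds hy) hHeq
    rw [hev.deriv_eq]
    exact (hfd y hy).deriv
  set G1 : ℂ := ∑' n : ℕ, (c (n + 1) * ((n : ℂ) + 1)) * z ^ n with hG1def
  set G2 : ℂ := ∑' n : ℕ, (c (n + 1) * ((n : ℂ) + 1)) * ((n : ℂ) * z ^ (n - 1)) with hG2def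
  have hderivHz : deriv H z = -(z ^ 2)⁻¹ + G1 := hderivH z hzV
  have hderiv2 : deriv (deriv H) z = 2 * (z ^ 3)⁻¹ + G2 := by
    have hev : deriv H =ᶠ[nhds z]
        (fun w => -(w ^ 2)⁻¹ + ∑' n : ℕ, (c (n + 1) * ((n : ℂ) + 1)) * w ^ n) :=
      Filter.eventuallyEq_of_mem (hVo.mem_nhds hzV) hderivH
    rw [hev.deriv_eq]
    have h1 : HasDerivAt (fun w : ℂ => -(w ^ 2)⁻¹ + ∑' n : ℕ, (c (n + 1) * ((n : ℂ) + 1)) * w ^ n)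
        (2 * (z ^ 3)⁻¹ + G2) z := by
      have hinv := (((hasDerivAt_pow 2 z).inv (pow_ne_zero 2 hz)).neg).add (hg1d z hzU)
      refine hinv.congr_deriv ?_
      have hz2 : (z : ℂ) ^ 2 ≠ 0 := pow_ne_zero 2 hz
      have hz3 : (z : ℂ) ^ 3 ≠ 0 := pow_ne_zero 3 hz
      rw [hG2def]
      field_simp
      ring
    exact h1.deriv
  have hs1z : Summable (fun n : ℕ => (c (n + 1) * ((n : ℂ) + 1)) * z ^ n) :=
    Summable.of_norm_bounded hu1 (fun n => hb1 n z hzU)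
  have hs2z : Summable (fun n : ℕ => (c (n + 1) * ((n : ℂ) + 1)) * ((n : ℂ) * z ^ (n - 1))) :=
    Summable.of_norm_bounded hu2 (fun n => hb2 n z hzU)
  set N : ℂ := ∑' n : ℕ, ((n : ℂ) + 1) * ((n : ℂ) + 2) * c (n + 1) * z ^ n with hNdef
  have hNid : z * G2 + 2 * G1 = N := by
    rw [hG1def, hG2def, hNdef, ← tsum_mul_left, ← tsum_mul_left,
      ← Summable.tsum_add (hs2z.mul_left z) (hs1z.mul_left 2)]
    refine tsum_congr (fun n => ?_)
    cases n with
    | zero => simp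
    | succ m =>
      simp only [Nat.add_sub_cancel]
      push_cast
      rw [pow_succ]
      ring
  -- norm bounds
  have hrt : ∀ n : ℕ, r ^ n ≤ r ^ (n + 2) * (t ^ 2)⁻¹ := by
    intro n
    have h2 : (1 : ℝ) ≤ r ^ 2 * (t ^ 2)⁻¹ := by
      rw [← div_eq_mul_inv, le_div_iff₀ (by positivity)]
      nlinarith
    calc r ^ n = r ^ n * 1 := by ring
      _ ≤ r ^ n * (r ^ 2 * (t ^ 2)⁻¹) := mul_le_mul_of_nonneg_left h2 (by positivity)
      _ = r ^ (n + 2) * (t ^ 2)⁻¹ := by rw [pow_add]; ring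
  have habs1 : ‖G1‖ ≤ S * (t ^ 2)⁻¹ := by
    have h1 : ‖G1‖ ≤ ∑' n : ℕ, ‖(c (n + 1) * ((n : ℂ) + 1)) * z ^ n‖ :=
      norm_tsum_le_tsum_norm (hs1z.norm)
    have h2 : ∑' n : ℕ, ‖(c (n + 1) * ((n : ℂ) + 1)) * z ^ n‖
        ≤ ∑' n : ℕ, ((n : ℝ) + 1) * ‖c (n + 1)‖ * r ^ (n + 2) * (t ^ 2)⁻¹ := by
      refine Summable.tsum_le_tsum (fun n => ?_) hs1z.norm (hsum1.mul_right _)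
      refine (hb1 n z hzU).trans ?_
      calc ((n : ℝ) + 1) * ‖c (n + 1)‖ * r ^ n
          ≤ (((n : ℝ) + 1) * ‖c (n + 1)‖) * (r ^ (n + 2) * (t ^ 2)⁻¹) :=
            mul_le_mul_of_nonneg_left (hrt n) (by positivity)
        _ = ((n : ℝ) + 1) * ‖c (n + 1)‖ * r ^ (n + 2) * (t ^ 2)⁻¹ := by ring
    have h3 : ∑' n : ℕ, ((n : ℝ) + 1) * ‖c (n + 1)‖ * r ^ (n + 2) * (t ^ 2)⁻¹
        = S * (t ^ 2)⁻¹ := by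
      rw [hSdef]; exact tsum_mul_right
    linarith
  have hbN : ∀ n : ℕ, ‖((n : ℂ) + 1) * ((n : ℂ) + 2) * c (n + 1) * z ^ n‖
      ≤ ((n : ℝ) + 1) * ((n : ℝ) + 2) * ‖c (n + 1)‖ * r ^ n := by
    intro n
    have h1 : ‖((n : ℂ) + 1) * ((n : ℂ) + 2) * c (n + 1) * z ^ n‖
        = ((n : ℝ) + 1) * ((n : ℝ) + 2) * ‖c (n + 1)‖ * t ^ n := by
      simp only [norm_mul, norm_pow]
      rw [show ((n : ℂ) + 1) = ((n + 1 : ℕ) : ℂ) by push_cast; ring,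
        show ((n : ℂ) + 2) = ((n + 2 : ℕ) : ℂ) by push_cast; ring,
        Complex.norm_natCast, Complex.norm_natCast]
      push_cast; ring
    rw [h1]
    gcongr
  have hsNz : Summable (fun n : ℕ => ((n : ℂ) + 1) * ((n : ℂ) + 2) * c (n + 1) * z ^ n) :=
    Summable.of_norm_bounded huT hbN
  have habsN : ‖N‖ ≤ T * (t ^ 2)⁻¹ := by
    have h1 : ‖N‖ ≤ ∑' n : ℕ, ‖((n : ℂ) + 1) * ((n : ℂ) + 2) * c (n + 1) * z ^ n‖ :=
      norm_tsum_le_tsum_norm (hsNz.norm)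
    have h2 : ∑' n : ℕ, ‖((n : ℂ) + 1) * ((n : ℂ) + 2) * c (n + 1) * z ^ n‖
        ≤ ∑' n : ℕ, ((n : ℝ) + 1) * ((n : ℝ) + 2) * ‖c (n + 1)‖ * r ^ (n + 2) * (t ^ 2)⁻¹ := by
      refine Summable.tsum_le_tsum (fun n => ?_) hsNz.norm (hsumT.mul_right _)
      refine (hbN n).trans ?_
      calc ((n : ℝ) + 1) * ((n : ℝ) + 2) * ‖c (n + 1)‖ * r ^ n
          ≤ (((n : ℝ) + 1) * ((n : ℝ) + 2) * ‖c (n + 1)‖) * (r ^ (n + 2) * (t ^ 2)⁻¹) :=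
            mul_le_mul_of_nonneg_left (hrt n) (by positivity)
        _ = ((n : ℝ) + 1) * ((n : ℝ) + 2) * ‖c (n + 1)‖ * r ^ (n + 2) * (t ^ 2)⁻¹ := by ring
    have h3 : ∑' n : ℕ, ((n : ℝ) + 1) * ((n : ℝ) + 2) * ‖c (n + 1)‖ * r ^ (n + 2) * (t ^ 2)⁻¹
        = T * (t ^ 2)⁻¹ := by
      rw [hTdef]; exact tsum_mul_right
    linarith
  -- lower bound on |H'|
  have habsz2 : ‖(z ^ 2)⁻¹‖ = (t ^ 2)⁻¹ := by
    rw [norm_inv, norm_pow]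
  have hDlb : (1 - S) * (t ^ 2)⁻¹ ≤ ‖-(z ^ 2)⁻¹ + G1‖ := by
    have h1 : ‖(z ^ 2)⁻¹‖ - ‖G1‖ ≤ ‖(z ^ 2)⁻¹ - G1‖ := norm_sub_norm_le _ _
    have h2 : ‖(z ^ 2)⁻¹ - G1‖ = ‖-(z ^ 2)⁻¹ + G1‖ := by
      rw [show (z ^ 2)⁻¹ - G1 = -(-(z ^ 2)⁻¹ + G1) by ring, norm_neg]
    rw [h2, habsz2] at h1
    have hexp : (1 - S) * (t ^ 2)⁻¹ = (t ^ 2)⁻¹ - S * (t ^ 2)⁻¹ := by ring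
    linarith
  have h1S : 0 < 1 - S := by linarith
  have hDpos : 0 < ‖-(z ^ 2)⁻¹ + G1‖ :=
    lt_of_lt_of_le (by positivity) hDlb
  have hD0 : (-(z ^ 2)⁻¹ + G1) ≠ 0 := by
    intro h
    rw [h] at hDpos
    simp at hDpos
  -- final computation
  rw [hderiv2, hderivHz]
  have key : z * (2 * (z ^ 3)⁻¹ + G2) / (-(z ^ 2)⁻¹ + G1) + 2 = N / (-(z ^ 2)⁻¹ + G1) := by
    rw [div_add' _ _ _ hD0]
    congr 1
    rw [← hNid]
    have hz3 : (z : ℂ) ^ 3 ≠ 0 := pow_ne_zero 3 hz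
    field_simp
    ring
  rw [key, norm_div]
  rw [div_le_iff₀ hDpos]
  calc ‖N‖ ≤ T * (t ^ 2)⁻¹ := habsN
    _ ≤ ((1 - ρ) * (1 - S)) * (t ^ 2)⁻¹ := mul_le_mul_of_nonneg_right hT (by positivity)
    _ = (1 - ρ) * ((1 - S) * (t ^ 2)⁻¹) := by ring
    _ ≤ (1 - ρ) * ‖-(z ^ 2)⁻¹ + G1‖ :=
        mul_le_mul_of_nonneg_left hDlb (by linarith)
end
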